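/- Let n be a natural number, W a subset of Fin n, v, p : Fin n → Bool, ι a type, and σ : Fin n → Bool → ι a function such that (1) σ i b = σ j b' implies i = j, and (2) for each i, σ i false = σ i true holds if and only if i ∈ W. Then in the multivariate polynomial ring MvPolynomial ι ℤ, ∏_{i : Fin n} X_{σ i (p i)} = ∏_{i : Fin n} X_{σ i (v i)} if and only if p i = v i for every i ∉ W. -/

import Mathlib

open MvPolynomial

lemma prod_X_eq_monomial' {ι R : Type*} [CommSemiring R] {α : Type*} (s : Finset α)
    (f : α → ι) :
    (∏ i ∈ s, (X (f i) : MvPolynomial ι R)) =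
      monomial (∑ i ∈ s, Finsupp.single (f i) 1) (1 : R) := by
  classical
  induction s using Finset.induction with
  | empty => simp
  | insert _ _ h ih =>
      rw [Finset.prod_insert h, Finset.sum_insert h, ih, X, monomial_mul, one_mul]

/-- Functional correctness of the naive obfuscated rule: the zero test succeeds
exactly on packets matching the rule `(v, W)`. -/
theorem naive_rule_correct (n : ℕ) (W : Set (Fin n)) (v p : Fin n → Bool)
    (ι : Type*) (σ : Fin n → Bool → ι)
    (hinj : ∀ i j b b', σ i b = σ j b' → i = j)
    (hW : ∀ i, σ i false = σ i true ↔ i ∈ W) :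
    (∏ i : Fin n, (X (σ i (p i)) : MvPolynomial ι ℤ)) =
        ∏ i : Fin n, X (σ i (v i)) ↔
      ∀ i, i ∉ W → p i = v i := by
  classical
  rw [prod_X_eq_monomial', prod_X_eq_monomial']
  constructor
  · intro h i hiW
    by_contra hne
    have hsum : (∑ j : Fin n, Finsupp.single (σ j (p j)) (1 : ℕ)) =
        ∑ j : Fin n, Finsupp.single (σ j (v j)) 1 := by
      have := (monomial_eq_monomial_iff _ _ (1 : ℤ) 1).mp h
      rcases this with h1 | h2
      · exact h1.1
      · exact absurd h2.1 one_ne_zero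
    have := DFunLike.congr_fun hsum (σ i (p i))
    rw [Finsupp.finset_sum_apply, Finsupp.finset_sum_apply] at this
    have hL : (∑ j : Fin n, (Finsupp.single (σ j (p j)) (1:ℕ)) (σ i (p i))) = 1 := by
      rw [Finset.sum_eq_single i]
      · simp
      · intro j _ hji
        rw [Finsupp.single_apply, if_neg]
        intro he; exact hji (hinj _ _ _ _ he)
      · simp
    have hR : (∑ j : Fin n, (Finsupp.single (σ j (v j)) (1:ℕ)) (σ i (p i))) = 0 := by
      apply Finset.sum_eq_zero
      intro j _
      rw [Finsupp.single_apply, if_neg]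
      intro he
      have hji := hinj _ _ _ _ he
      subst hji
      have : σ j false = σ j true := by
        cases hp : p j <;> cases hv : v j <;> rw [hp, hv] at he hne <;>
          first | exact he | exact he.symm | exact absurd rfl hne
      exact hiW ((hW j).mp this)
    rw [hL, hR] at this
    exact one_ne_zero this
  · intro h
    have hs : (∑ i : Fin n, Finsupp.single (σ i (p i)) (1:ℕ)) =
        ∑ i : Fin n, Finsupp.single (σ i (v i)) 1 := by
      apply Finset.sum_congr rfl
      intro i _
      by_cases hi : i ∈ W
      · have hσ : σ i false = σ i true := (hW i).mpr hi
        cases hp : p i <;> cases hv : v i <;> simp [hσ]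
      · rw [h i hi]
    rw [hs]
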